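/- For patterns p, q, r over a finite ground set U, p ⋈ q is consistent with r if and only if p is consistent with q ⋈ r. -/

import Mathlib

open Finset
open scoped Classical

namespace PatternST

variable {α : Type*} [DecidableEq α]

/-- `p` is a pattern over ground set `U` with zero element `z`:
a family of subsets of `U ∪ {z}` with exactly one member containing `z`. -/
def IsPattern (z : α) (U : Finset α) (p : Finset (Finset α)) : Prop :=
  (∀ S ∈ p, S ⊆ insert z U) ∧ ∃! S, S ∈ p ∧ z ∈ S

/-- Two sets are linked if one belongs to `p`, the other to `q`, and they intersect. -/
def linkRel (p q : Finset (Finset α)) (S T : Finset α) : Prop :=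
  ((S ∈ p ∧ T ∈ q) ∨ (S ∈ q ∧ T ∈ p)) ∧ (S ∩ T).Nonempty

/-- Reflexive-transitive (and, by symmetry of `linkRel`, symmetric) closure. -/
def conn (p q : Finset (Finset α)) : Finset α → Finset α → Prop :=
  Relation.ReflTransGen (linkRel p q)

/-- The join `p ⋈ q`: unions of the equivalence classes of `conn` on `p ∪ q`. -/
noncomputable def pjoin (p q : Finset (Finset α)) : Finset (Finset α) :=
  (p ∪ q).image fun S => ((p ∪ q).filter fun T => conn p q S T).sup id

/-- `p` and `q` are consistent if `p ⋈ q` consists of a single set. -/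
def consistent (p q : Finset (Finset α)) : Prop := (pjoin p q).card = 1

/-- The labels (elements of `U`, i.e. everything except `z`) occurring in `p`. -/
def lbs (z : α) (p : Finset (Finset α)) : Finset α := (p.sup id).erase z

/-- The labels appearing as singletons in `p`. -/
def sing (z : α) (p : Finset (Finset α)) : Finset α :=
  (lbs z p).filter fun u => ({u} : Finset α) ∈ p

/-- A pattern is complete if every occurring label occurs as a singleton. -/
def Complete (z : α) (p : Finset (Finset α)) : Prop := lbs z p = sing z p

noncomputable def cls (p q : Finset (Finset α)) (S : Finset α) : Finset α :=
  ((p ∪ q).filter fun T => conn p q S T).sup id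
lemma pjoin_eq (p q : Finset (Finset α)) : pjoin p q = (p ∪ q).image (cls p q) := rfl
lemma linkRel_symm {p q : Finset (Finset α)} : Symmetric (linkRel p q) := by
  rintro S T ⟨h, n⟩; exact ⟨by tauto, by rwa [Finset.inter_comm]⟩
lemma conn_symm {p q : Finset (Finset α)} {S T : Finset α} (h : conn p q S T) : conn p q T S :=
  @Std.Symm.symm _ _ (@Relation.ReflTransGen.stdSymm _ _ ⟨fun _ _ h => linkRel_symm h⟩) _ _ h
lemma cls_congr {p q : Finset (Finset α)} {S T : Finset α} (h : conn p q S T) :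
    cls p q S = cls p q T := by
  unfold cls; congr 1
  apply Finset.filter_congr
  intro X _
  exact ⟨fun hx => Relation.ReflTransGen.trans (conn_symm h) hx,
         fun hx => Relation.ReflTransGen.trans h hx⟩
lemma mem_cls {p q : Finset (Finset α)} {S : Finset α} {u : α} :
    u ∈ cls p q S ↔ ∃ T, T ∈ p ∪ q ∧ conn p q S T ∧ u ∈ T := by
  unfold cls; simp [Finset.mem_sup, Finset.mem_filter, and_assoc]
lemma subset_cls {p q : Finset (Finset α)} {S : Finset α} (hS : S ∈ p ∪ q) :
    S ⊆ cls p q S := fun u hu => mem_cls.mpr ⟨S, hS, Relation.ReflTransGen.refl, hu⟩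
lemma cls_mem_pjoin {p q : Finset (Finset α)} {S : Finset α} (hS : S ∈ p ∪ q) :
    cls p q S ∈ pjoin p q := by
  rw [pjoin_eq]; exact mem_image_of_mem _ hS


lemma linkRel_comm (p q : Finset (Finset α)) : linkRel p q = linkRel q p := by
  funext S T
  apply propext
  constructor <;> (rintro ⟨h, n⟩; exact ⟨by tauto, n⟩)

lemma pjoin_comm (p q : Finset (Finset α)) : pjoin p q = pjoin q p := by
  unfold pjoin conn
  rw [Finset.union_comm, linkRel_comm]

lemma isPattern_pjoin {z : α} {U : Finset α} {p q : Finset (Finset α)}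
    (hp : IsPattern z U p) (hq : IsPattern z U q) : IsPattern z U (pjoin p q) := by
  obtain ⟨Zp, ⟨hZp, hzp⟩, hpu⟩ := hp.2
  obtain ⟨Zq, ⟨hZq, hzq⟩, hqu⟩ := hq.2
  constructor
  · intro A hA
    rw [pjoin_eq] at hA
    obtain ⟨S, hS, rfl⟩ := mem_image.mp hA
    intro u hu
    obtain ⟨T, hT, _, huT⟩ := mem_cls.mp hu
    rcases mem_union.mp hT with h | h
    · exact hp.1 T h huT
    · exact hq.1 T h huT
  · refine ⟨cls p q Zp, ⟨cls_mem_pjoin (mem_union_left _ hZp),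
      subset_cls (mem_union_left _ hZp) hzp⟩, ?_⟩
    rintro A ⟨hA, hzA⟩
    rw [pjoin_eq] at hA
    obtain ⟨S, hS, rfl⟩ := mem_image.mp hA
    apply cls_congr
    obtain ⟨T, hT, hconn, hzT⟩ := mem_cls.mp hzA
    rcases mem_union.mp hT with h | h
    · rwa [hpu T ⟨h, hzT⟩] at hconn
    · have hTZq : T = Zq := hqu T ⟨h, hzT⟩
      subst hTZq
      exact hconn.tail ⟨Or.inr ⟨hZq, hZp⟩, ⟨z, mem_inter.mpr ⟨hzq, hzp⟩⟩⟩

lemma consistent_all_conn {z : α} {U : Finset α} {x y : Finset (Finset α)}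
    (hx : IsPattern z U x) (hy : IsPattern z U y) (h : consistent x y) :
    ∀ S ∈ x ∪ y, ∀ T ∈ x ∪ y, conn x y S T := by
  obtain ⟨Zx, ⟨hZx, hzx⟩, hxu⟩ := hx.2
  obtain ⟨Zy, ⟨hZy, hzy⟩, hyu⟩ := hy.2
  obtain ⟨C, hC⟩ := Finset.card_eq_one.mp h
  have key : ∀ S ∈ x ∪ y, conn x y S Zx := by
    intro S hS
    have h1 : cls x y S ∈ pjoin x y := cls_mem_pjoin hS
    have h2 : cls x y Zx ∈ pjoin x y := cls_mem_pjoin (mem_union_left _ hZx)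
    rw [hC, mem_singleton] at h1 h2
    have heq : cls x y S = cls x y Zx := h1.trans h2.symm
    have hz : z ∈ cls x y S := heq ▸ (subset_cls (mem_union_left _ hZx) hzx)
    obtain ⟨T, hT, hconn, hzT⟩ := mem_cls.mp hz
    rcases mem_union.mp hT with h' | h'
    · rwa [hxu T ⟨h', hzT⟩] at hconn
    · have hTZ : T = Zy := hyu T ⟨h', hzT⟩
      subst hTZ
      exact hconn.tail ⟨Or.inr ⟨hZy, hZx⟩, ⟨z, mem_inter.mpr ⟨hzy, hzx⟩⟩⟩
  intro S hS T hT
  exact (key S hS).trans (conn_symm (key T hT))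

lemma all_conn_consistent {x y : Finset (Finset α)} {W : Finset α} (hW : W ∈ x ∪ y)
    (h : ∀ S ∈ x ∪ y, ∀ T ∈ x ∪ y, conn x y S T) : consistent x y := by
  apply Finset.card_eq_one.mpr ⟨cls x y W, ?_⟩
  rw [pjoin_eq]
  apply Finset.Subset.antisymm
  · intro A hA
    obtain ⟨S, hS, rfl⟩ := mem_image.mp hA
    rw [mem_singleton]
    exact cls_congr (h S hS W hW)
  · intro A hA
    rw [mem_singleton] at hA
    exact hA ▸ mem_image_of_mem _ hW


def link3 (p q r : Finset (Finset α)) (S T : Finset α) : Prop :=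
  linkRel p q S T ∨ linkRel p r S T ∨ linkRel q r S T

def conn3 (p q r : Finset (Finset α)) : Finset α → Finset α → Prop :=
  Relation.ReflTransGen (link3 p q r)

lemma link3_symm {p q r : Finset (Finset α)} : Symmetric (link3 p q r) := by
  rintro S T (h | h | h)
  exacts [Or.inl (linkRel_symm h), Or.inr (Or.inl (linkRel_symm h)),
    Or.inr (Or.inr (linkRel_symm h))]

lemma conn3_symm {p q r : Finset (Finset α)} {S T : Finset α} (h : conn3 p q r S T) :
    conn3 p q r T S :=
    @Std.Symm.symm _ _ (@Relation.ReflTransGen.stdSymm _ _ ⟨fun _ _ h => link3_symm h⟩) _ _ h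

lemma conn_le_conn3 {p q r : Finset (Finset α)} {S T : Finset α} (h : conn p q S T) :
    conn3 p q r S T := Relation.ReflTransGen.mono (fun _ _ h => Or.inl h) _ _ h

lemma link3_inter {p q r : Finset (Finset α)} {S T : Finset α} (h : link3 p q r S T) :
    (S ∩ T).Nonempty := by rcases h with ⟨_, n⟩ | ⟨_, n⟩ | ⟨_, n⟩ <;> exact n

lemma link3_pq_r {p q r : Finset (Finset α)} {a b : Finset α} (ha : a ∈ p ∪ q) (hb : b ∈ r)
    (hn : (a ∩ b).Nonempty) : link3 p q r a b := by
  rcases mem_union.mp ha with h | h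
  · exact Or.inr (Or.inl ⟨Or.inl ⟨h, hb⟩, hn⟩)
  · exact Or.inr (Or.inr ⟨Or.inl ⟨h, hb⟩, hn⟩)

lemma link3_r_pq {p q r : Finset (Finset α)} {a b : Finset α} (ha : a ∈ r) (hb : b ∈ p ∪ q)
    (hn : (a ∩ b).Nonempty) : link3 p q r a b :=
  link3_symm (link3_pq_r hb ha (by rwa [Finset.inter_comm]))

-- Good predicate for forward direction
def Good (p q r : Finset (Finset α)) (S X : Finset α) : Prop :=
  (X ∈ pjoin p q ∧ ∀ u ∈ X, ∃ a, a ∈ p ∪ q ∧ u ∈ a ∧ conn3 p q r S a) ∨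
  (X ∈ r ∧ conn3 p q r S X)

lemma good_step {p q r : Finset (Finset α)} {S A B : Finset α}
    (hA : Good p q r S A) (h : linkRel (pjoin p q) r A B) : Good p q r S B := by
  obtain ⟨hmem, u, hu⟩ := h
  have huA : u ∈ A := (mem_inter.mp hu).1
  have huB : u ∈ B := (mem_inter.mp hu).2
  rcases hmem with ⟨hAP, hBr⟩ | ⟨hAr, hBP⟩
  · -- A ∈ pjoin p q, B ∈ r
    right
    refine ⟨hBr, ?_⟩
    rcases hA with ⟨_, hcov⟩ | ⟨hAr, hconn⟩
    · obtain ⟨a, hapq, hua, hSa⟩ := hcov u huA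
      exact hSa.tail (link3_pq_r hapq hBr ⟨u, mem_inter.mpr ⟨hua, huB⟩⟩)
    · rw [pjoin_eq] at hAP
      obtain ⟨s, hs, hAeq⟩ := mem_image.mp hAP
      obtain ⟨s', hs', _, hus'⟩ := mem_cls.mp (hAeq ▸ huA : u ∈ cls p q s)
      exact (hconn.tail (link3_r_pq hAr hs' ⟨u, mem_inter.mpr ⟨huA, hus'⟩⟩)).tail
        (link3_pq_r hs' hBr ⟨u, mem_inter.mpr ⟨hus', huB⟩⟩)
  · -- A ∈ r, B ∈ pjoin p q
    left
    refine ⟨hBP, ?_⟩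
    rw [pjoin_eq] at hBP
    obtain ⟨t, ht, hBeq⟩ := mem_image.mp hBP
    obtain ⟨t'', ht'', htt'', hut''⟩ := mem_cls.mp (hBeq ▸ huB : u ∈ cls p q t)
    have hSt'' : conn3 p q r S t'' := by
      rcases hA with ⟨_, hcov⟩ | ⟨_, hconn⟩
      · obtain ⟨a, hapq, hua, hSa⟩ := hcov u huA
        exact (hSa.tail (link3_pq_r hapq hAr ⟨u, mem_inter.mpr ⟨hua, huA⟩⟩)).tail
          (link3_r_pq hAr ht'' ⟨u, mem_inter.mpr ⟨huA, hut''⟩⟩)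
      · exact hconn.tail (link3_r_pq hAr ht'' ⟨u, mem_inter.mpr ⟨huA, hut''⟩⟩)
    intro v hv
    obtain ⟨t', ht', htt', hvt'⟩ := mem_cls.mp (hBeq ▸ hv : v ∈ cls p q t)
    exact ⟨t', ht', hvt',
      hSt''.trans (conn_le_conn3 ((conn_symm htt'').trans htt'))⟩

lemma good_of_conn {p q r : Finset (Finset α)} {S A B : Finset α}
    (h : conn (pjoin p q) r A B) (hA : Good p q r S A) : Good p q r S B := by
  induction h with
  | refl => exact hA
  | tail _ h2 ih => exact good_step ih h2

-- lifting for the backward direction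
noncomputable def lift (p q : Finset (Finset α)) (a : Finset α) : Finset α :=
  if a ∈ p ∪ q then cls p q a else a

lemma lift_step {p q r : Finset (Finset α)} {a b : Finset α} (h : link3 p q r a b) :
    conn (pjoin p q) r (lift p q a) (lift p q b) := by
  have hab : (a ∩ b).Nonempty := link3_inter h
  -- helper for the (p∪q) -- r case
  have H1 : ∀ {a b : Finset α}, a ∈ p ∪ q → b ∈ r → (a ∩ b).Nonempty →
      conn (pjoin p q) r (lift p q a) (lift p q b) := by
    intro a b ha hb hn
    have h1 : linkRel (pjoin p q) r (cls p q a) b :=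
      ⟨Or.inl ⟨cls_mem_pjoin ha, hb⟩,
        hn.mono (inter_subset_inter (subset_cls ha) (Finset.Subset.refl _))⟩
    rw [lift, if_pos ha]
    by_cases hb' : b ∈ p ∪ q
    · rw [lift, if_pos hb']
      have h2 : linkRel (pjoin p q) r b (cls p q b) :=
        ⟨Or.inr ⟨hb, cls_mem_pjoin hb'⟩,
          hn.mono (fun v hv => mem_inter.mpr ⟨(mem_inter.mp hv).2,
            subset_cls hb' (mem_inter.mp hv).2⟩)⟩
      exact (Relation.ReflTransGen.single h1).tail h2
    · rw [lift, if_neg hb']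
      exact Relation.ReflTransGen.single h1
  have H2 : ∀ {a b : Finset α}, a ∈ r → b ∈ p ∪ q → (a ∩ b).Nonempty →
      conn (pjoin p q) r (lift p q a) (lift p q b) := by
    intro a b ha hb hn
    exact conn_symm (H1 hb ha (by rwa [Finset.inter_comm]))
  have H3 : ∀ {a b : Finset α}, linkRel p q a b →
      conn (pjoin p q) r (lift p q a) (lift p q b) := by
    intro a b hl
    have ha : a ∈ p ∪ q := by rcases hl.1 with ⟨h1, _⟩ | ⟨h1, _⟩
                              exacts [mem_union_left _ h1, mem_union_right _ h1]
    have hb : b ∈ p ∪ q := by rcases hl.1 with ⟨_, h1⟩ | ⟨_, h1⟩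
                              exacts [mem_union_right _ h1, mem_union_left _ h1]
    rw [lift, if_pos ha, lift, if_pos hb,
      cls_congr (Relation.ReflTransGen.single hl)]
    exact Relation.ReflTransGen.refl
  rcases h with hl | ⟨hm, _⟩ | ⟨hm, _⟩
  · exact H3 hl
  · rcases hm with ⟨h1, h2⟩ | ⟨h1, h2⟩
    · exact H1 (mem_union_left _ h1) h2 hab
    · exact H2 h1 (mem_union_left _ h2) hab
  · rcases hm with ⟨h1, h2⟩ | ⟨h1, h2⟩
    · exact H1 (mem_union_right _ h1) h2 hab
    · exact H2 h1 (mem_union_right _ h2) hab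

lemma lift_conn {p q r : Finset (Finset α)} {a b : Finset α} (h : conn3 p q r a b) :
    conn (pjoin p q) r (lift p q a) (lift p q b) := by
  induction h with
  | refl => exact Relation.ReflTransGen.refl
  | tail _ h2 ih => exact ih.trans (lift_step h2)

lemma main_iff {z : α} {U : Finset α} {p q r : Finset (Finset α)}
    (hp : IsPattern z U p) (hq : IsPattern z U q) (hr : IsPattern z U r) :
    consistent (pjoin p q) r ↔ ∀ S ∈ p ∪ q ∪ r, ∀ T ∈ p ∪ q ∪ r, conn3 p q r S T := by
  obtain ⟨Zp, ⟨hZp, hzp⟩, hpu⟩ := hp.2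
  obtain ⟨Zq, ⟨hZq, hzq⟩, hqu⟩ := hq.2
  have hZpmem : Zp ∈ p ∪ q := mem_union_left _ hZp
  have hZPmem : cls p q Zp ∈ pjoin p q := cls_mem_pjoin hZpmem
  constructor
  · intro hcons
    have hall := consistent_all_conn (isPattern_pjoin hp hq) hr hcons
    have key : ∀ S ∈ p ∪ q ∪ r, conn3 p q r S Zp := by
      intro S hS
      have hgood : Good p q r S (cls p q Zp) := by
        rcases mem_union.mp hS with hSpq | hSr
        · apply good_of_conn
            (hall _ (mem_union_left _ (cls_mem_pjoin hSpq)) _ (mem_union_left _ hZPmem))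
          left
          refine ⟨cls_mem_pjoin hSpq, ?_⟩
          intro u hu
          obtain ⟨a, ha, hconn, hua⟩ := mem_cls.mp hu
          exact ⟨a, ha, hua, conn_le_conn3 hconn⟩
        · apply good_of_conn
            (hall _ (mem_union_right _ hSr) _ (mem_union_left _ hZPmem))
          right
          exact ⟨hSr, Relation.ReflTransGen.refl⟩
      have hzZP : z ∈ cls p q Zp := subset_cls hZpmem hzp
      rcases hgood with ⟨_, hcov⟩ | ⟨hZPr, hconn⟩
      · obtain ⟨a, hapq, hza, hSa⟩ := hcov z hzZP
        rcases mem_union.mp hapq with h' | h'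
        · rwa [hpu a ⟨h', hza⟩] at hSa
        · have haZq : a = Zq := hqu a ⟨h', hza⟩
          subst haZq
          exact hSa.tail (Or.inl ⟨Or.inr ⟨hZq, hZp⟩, ⟨z, mem_inter.mpr ⟨hzq, hzp⟩⟩⟩)
      · exact hconn.tail (link3_r_pq hZPr hZpmem ⟨z, mem_inter.mpr ⟨hzZP, hzp⟩⟩)
    intro S hS T hT
    exact (key S hS).trans (conn3_symm (key T hT))
  · intro hall
    have hZpun : Zp ∈ p ∪ q ∪ r := mem_union_left _ hZpmem
    have hne : ∀ X ∈ p ∪ q ∪ r, X.Nonempty := by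
      intro X hX
      rcases (hall X hX Zp hZpun).cases_head with heq | ⟨Y, hXY, _⟩
      · exact heq ▸ ⟨z, hzp⟩
      · obtain ⟨u, hu⟩ := link3_inter hXY
        exact ⟨u, (mem_inter.mp hu).1⟩
    have key : ∀ A ∈ pjoin p q ∪ r, conn (pjoin p q) r A (cls p q Zp) := by
      intro A hA
      have hlZp : lift p q Zp = cls p q Zp := by rw [lift, if_pos hZpmem]
      rcases mem_union.mp hA with hAP | hAr
      · rw [pjoin_eq] at hAP
        obtain ⟨s, hs, rfl⟩ := mem_image.mp hAP
        have h2 := lift_conn (hall s (mem_union_left _ hs) Zp hZpun)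
        rwa [lift, if_pos hs, hlZp] at h2
      · by_cases hApq : A ∈ p ∪ q
        · have h1 : linkRel (pjoin p q) r A (cls p q A) :=
            ⟨Or.inr ⟨hAr, cls_mem_pjoin hApq⟩, by
              obtain ⟨u, hu⟩ := hne A (mem_union_right _ hAr)
              exact ⟨u, mem_inter.mpr ⟨hu, subset_cls hApq hu⟩⟩⟩
          have h2 := lift_conn (hall A (mem_union_right _ hAr) Zp hZpun)
          rw [lift, if_pos hApq, hlZp] at h2
          exact (Relation.ReflTransGen.single h1).trans h2
        · have h2 := lift_conn (hall A (mem_union_right _ hAr) Zp hZpun)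
          rwa [lift, if_neg hApq, hlZp] at h2
    apply all_conn_consistent (mem_union_left _ hZPmem)
    intro S hS T hT
    exact (key S hS).trans (conn_symm (key T hT))

/-- `p ⋈ q ∼ r` iff `p ∼ q ⋈ r`. -/
theorem join_consistent_other_side (z : α) (U : Finset α) (p q r : Finset (Finset α))
    (hp : IsPattern z U p) (hq : IsPattern z U q) (hr : IsPattern z U r) :
    consistent (pjoin p q) r ↔ consistent p (pjoin q r) := by
  have h2 : consistent p (pjoin q r) ↔ consistent (pjoin q r) p := by
    unfold consistent
    rw [pjoin_comm]
  rw [main_iff hp hq hr, h2, main_iff hq hr hp]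
  have hun : q ∪ r ∪ p = p ∪ q ∪ r := by
    ext X; simp only [mem_union]; tauto
  have hrel : link3 q r p = link3 p q r := by
    funext S T
    unfold link3
    rw [linkRel_comm q p, linkRel_comm r p]
    apply propext; tauto
  have hl3 : conn3 q r p = conn3 p q r := by unfold conn3; rw [hrel]
  rw [hun, hl3]

end PatternST
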